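/- Let C be a dg category whose pretriangulated hull is \bar{C}, and let J be a dg ideal of \bar{C}. Then J equals the ideal of morphisms whose components lie in the restriction of J to C; that is, J = \overline{J|_C}. -/
import Mathlib


/-!
STATEMENT 9: Let `\bar C` be the pretriangulated hull (one-sided twisted complexes) of a
dg category `C`, and `J` a dg ideal of `\bar C`.  Then `J = \overline{J|_C}`: a morphism
of `\bar C` lies in `J` if and only if all its matrix components (with respect to the
decomposition of the objects of `\bar C` into finite sums of shifted objects of `C`)
lie in the restriction of `J` to `C`.

We model the hull abstractly: `ι : C ⥤ \bar C` is a full dg subcategory, and each object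
`K` of `\bar C` comes with a finite decomposition into objects of `C`, recorded by
injections `inj` and projections `proj` with `∑ proj ≫ inj = 𝟙 K` (the graded,
not necessarily closed, structure morphisms of a one-sided twisted complex).
The components of `f : K ⟶ L` are the morphisms `inj K i ≫ f ≫ proj L j`.
-/

open CategoryTheory

universe v u v' u'

structure DGStruct (C : Type u) [Category.{v} C] [Preadditive C] where
  d : ∀ {X Y : C}, (X ⟶ Y) →+ (X ⟶ Y)
  d_sq : ∀ {X Y : C} (f : X ⟶ Y), d (d f) = 0
  leibniz : ∀ {X Y Z : C} (f : X ⟶ Y) (g : Y ⟶ Z), d (f ≫ g) = d f ≫ g + f ≫ d g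

structure DGIdeal {C : Type u} [Category.{v} C] [Preadditive C] (D : DGStruct C) where
  carrier : ∀ X Y : C, AddSubgroup (X ⟶ Y)
  comp_left : ∀ {X Y Z : C} (f : X ⟶ Y) (g : Y ⟶ Z), f ∈ carrier X Y → f ≫ g ∈ carrier X Z
  comp_right : ∀ {X Y Z : C} (f : X ⟶ Y) (g : Y ⟶ Z), g ∈ carrier Y Z → f ≫ g ∈ carrier X Z
  d_mem : ∀ {X Y : C} (f : X ⟶ Y), f ∈ carrier X Y → D.d f ∈ carrier X Y

/-- Decomposition of each object of the hull `\bar C` into a finite (twisted) sum of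
objects of `C`. -/
structure SumDecomp {C : Type u} [Category.{v} C] {Cbar : Type u'} [Category.{v'} Cbar]
    [Preadditive Cbar] (ι : C ⥤ Cbar) where
  n : Cbar → ℕ
  obj : ∀ K : Cbar, Fin (n K) → C
  inj : ∀ (K : Cbar) (i : Fin (n K)), ι.obj (obj K i) ⟶ K
  proj : ∀ (K : Cbar) (i : Fin (n K)), K ⟶ ι.obj (obj K i)
  total : ∀ K : Cbar, (∑ i, proj K i ≫ inj K i) = 𝟙 K

/-- A dg ideal of the hull is determined componentwise: `J = \overline{J|_C}`. -/
theorem stmt9 {C : Type u} [Category.{v} C] {Cbar : Type u'} [Category.{v'} Cbar]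
    [Preadditive Cbar] (ι : C ⥤ Cbar) [ι.Full] [ι.Faithful]
    (dec : SumDecomp ι) (D : DGStruct Cbar) (J : DGIdeal D) :
    ∀ {K L : Cbar} (f : K ⟶ L), f ∈ J.carrier K L ↔
      ∀ (i : Fin (dec.n K)) (j : Fin (dec.n L)),
        dec.inj K i ≫ f ≫ dec.proj L j ∈
          J.carrier (ι.obj (dec.obj K i)) (ι.obj (dec.obj L j)) := by
  intro K L f
  constructor
  · intro hf i j
    exact J.comp_right _ _ (J.comp_left _ _ hf)
  · intro h
    have : f = ∑ i, ∑ j, dec.proj K i ≫ (dec.inj K i ≫ f ≫ dec.proj L j) ≫ dec.inj L j := by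
      calc f = 𝟙 K ≫ f ≫ 𝟙 L := by simp
      _ = (∑ i, dec.proj K i ≫ dec.inj K i) ≫ f ≫ (∑ j, dec.proj L j ≫ dec.inj L j) := by
          rw [dec.total, dec.total]
      _ = ∑ i, ∑ j, dec.proj K i ≫ (dec.inj K i ≫ f ≫ dec.proj L j) ≫ dec.inj L j := by
          simp [Preadditive.sum_comp, Preadditive.comp_sum]; rw [Finset.sum_comm]
    rw [this]
    exact AddSubgroup.sum_mem _ fun i _ => AddSubgroup.sum_mem _ fun j _ =>
      J.comp_right _ _ (J.comp_left _ _ (h i j))
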